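/- For the polynomial P_6(z) = z + ((9+8√2)/(4√2+8))z² + ((6√2+10)/(4√2+8))z³ + ((4√2+6)/(4√2+8))z⁴ + ((2√2+2)/(4√2+8))z⁵ + (1/(4√2+8))z⁶ and every real t, one has |P_6(e^{it})| ≥ (1/4)·sec²(π/8), with equality when t = π. -/

import Mathlib

/-- The polynomial `P₆(z) = z + ((9+8√2)/(4√2+8))z² + ((6√2+10)/(4√2+8))z³ + ((4√2+6)/(4√2+8))z⁴
+ ((2√2+2)/(4√2+8))z⁵ + (1/(4√2+8))z⁶`. -/
noncomputable def P6 (z : ℂ) : ℂ :=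
  z + (((9 + 8 * Real.sqrt 2) / (4 * Real.sqrt 2 + 8) : ℝ) : ℂ) * z ^ 2 +
    (((6 * Real.sqrt 2 + 10) / (4 * Real.sqrt 2 + 8) : ℝ) : ℂ) * z ^ 3 +
    (((4 * Real.sqrt 2 + 6) / (4 * Real.sqrt 2 + 8) : ℝ) : ℂ) * z ^ 4 +
    (((2 * Real.sqrt 2 + 2) / (4 * Real.sqrt 2 + 8) : ℝ) : ℂ) * z ^ 5 +
    ((1 / (4 * Real.sqrt 2 + 8) : ℝ) : ℂ) * z ^ 6


private lemma r_sq : Real.sqrt 2 ^ 2 = 2 := Real.sq_sqrt (by norm_num)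

private lemma r_lb : (1.414:ℝ) ≤ Real.sqrt 2 := by
  nlinarith [r_sq, Real.sqrt_nonneg 2]

private lemma r_ub : Real.sqrt 2 ≤ (1.415:ℝ) := by
  nlinarith [r_sq, Real.sqrt_nonneg 2]

private lemma P6_eq (z : ℂ) :
    P6 z = z + ((1/4 + 7/8 * Real.sqrt 2 : ℝ) : ℂ) * z ^ 2
      + ((1 + 1/4 * Real.sqrt 2 : ℝ) : ℂ) * z ^ 3
      + ((1/2 + 1/4 * Real.sqrt 2 : ℝ) : ℂ) * z ^ 4
      + ((1/4 * Real.sqrt 2 : ℝ) : ℂ) * z ^ 5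
      + ((1/4 - 1/8 * Real.sqrt 2 : ℝ) : ℂ) * z ^ 6 := by
  have hne : (4 * Real.sqrt 2 + 8 : ℝ) ≠ 0 := by positivity
  have h2 : ((9 + 8 * Real.sqrt 2) / (4 * Real.sqrt 2 + 8) : ℝ) = 1/4 + 7/8 * Real.sqrt 2 := by
    rw [div_eq_iff hne]; linear_combination (-7/2 : ℝ) * r_sq
  have h3 : ((6 * Real.sqrt 2 + 10) / (4 * Real.sqrt 2 + 8) : ℝ) = 1 + 1/4 * Real.sqrt 2 := by
    rw [div_eq_iff hne]; linear_combination (-1 : ℝ) * r_sq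
  have h4 : ((4 * Real.sqrt 2 + 6) / (4 * Real.sqrt 2 + 8) : ℝ) = 1/2 + 1/4 * Real.sqrt 2 := by
    rw [div_eq_iff hne]; linear_combination (-1 : ℝ) * r_sq
  have h5 : ((2 * Real.sqrt 2 + 2) / (4 * Real.sqrt 2 + 8) : ℝ) = 1/4 * Real.sqrt 2 := by
    rw [div_eq_iff hne]; linear_combination (-1 : ℝ) * r_sq
  have h6 : ((1 : ℝ) / (4 * Real.sqrt 2 + 8)) = 1/4 - 1/8 * Real.sqrt 2 := by
    rw [div_eq_iff hne]; linear_combination (1/2 : ℝ) * r_sq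
  rw [P6, h2, h3, h4, h5, h6]


private noncomputable def Xf (a b : ℝ) : ℝ := (-1/4:ℝ)*b^2 + (-7/8:ℝ)*b^2*(Real.sqrt 2)^1 + (1/2:ℝ)*b^4 + (1/4:ℝ)*b^4*(Real.sqrt 2)^1 + (-1/4:ℝ)*b^6 + (1/8:ℝ)*b^6*(Real.sqrt 2)^1 + (1:ℝ)*a^1 + (-3:ℝ)*a^1*b^2 + (-3/4:ℝ)*a^1*b^2*(Real.sqrt 2)^1 + (5/4:ℝ)*a^1*b^4*(Real.sqrt 2)^1 + (1/4:ℝ)*a^2 + (7/8:ℝ)*a^2*(Real.sqrt 2)^1 + (-3:ℝ)*a^2*b^2 + (-3/2:ℝ)*a^2*b^2*(Real.sqrt 2)^1 + (15/4:ℝ)*a^2*b^4 + (-15/8:ℝ)*a^2*b^4*(Real.sqrt 2)^1 + (1:ℝ)*a^3 + (1/4:ℝ)*a^3*(Real.sqrt 2)^1 + (-5/2:ℝ)*a^3*b^2*(Real.sqrt 2)^1 + (1/2:ℝ)*a^4 + (1/4:ℝ)*a^4*(Real.sqrt 2)^1 + (-15/4:ℝ)*a^4*b^2 + (15/8:ℝ)*a^4*b^2*(Real.sqrt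 2)^1 + (1/4:ℝ)*a^5*(Real.sqrt 2)^1 + (1/4:ℝ)*a^6 + (-1/8:ℝ)*a^6*(Real.sqrt 2)^1
private noncomputable def Yf (a b : ℝ) : ℝ := (1:ℝ)*b^1 + (-1:ℝ)*b^3 + (-1/4:ℝ)*b^3*(Real.sqrt 2)^1 + (1/4:ℝ)*b^5*(Real.sqrt 2)^1 + (1/2:ℝ)*a^1*b^1 + (7/4:ℝ)*a^1*b^1*(Real.sqrt 2)^1 + (-2:ℝ)*a^1*b^3 + (-1:ℝ)*a^1*b^3*(Real.sqrt 2)^1 + (3/2:ℝ)*a^1*b^5 + (-3/4:ℝ)*a^1*b^5*(Real.sqrt 2)^1 + (3:ℝ)*a^2*b^1 + (3/4:ℝ)*a^2*b^1*(Real.sqrt 2)^1 + (-5/2:ℝ)*a^2*b^3*(Real.sqrt 2)^1 + (2:ℝ)*a^3*b^1 + (1:ℝ)*a^3*b^1*(Real.sqrt 2)^1 + (-5:ℝ)*a^3*b^3 + (5/2:ℝ)*a^3*b^3*(Real.sqrt 2)^1 + (5/4:ℝ)*a^4*b^1*(Real.sqrt 2)^1 + (3/2:ℝ)*a^5*b^1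 + (-3/4:ℝ)*a^5*b^1*(Real.sqrt 2)^1

private lemma P6_form (a b : ℝ) :
    P6 ((a : ℂ) + (b : ℂ) * Complex.I) = ((Xf a b : ℝ) : ℂ) + ((Yf a b : ℝ) : ℂ) * Complex.I := by
  rw [P6_eq, Xf, Yf]
  push_cast
  linear_combination ((1/4:ℂ)*(b:ℂ)^2 + (7/8:ℂ)*(b:ℂ)^2*((Real.sqrt 2 : ℝ):ℂ)^1 + (1:ℂ)*(b:ℂ)^3*Complex.I^1 + (1/4:ℂ)*(b:ℂ)^3*((Real.sqrt 2 : ℝ):ℂ)^1*Complex.I^1 + (-1/2:ℂ)*(b:ℂ)^4 + (1/2:ℂ)*(b:ℂ)^4*Complex.I^2 + (-1/4:ℂ)*(b:ℂ)^4*((Real.sqrt 2 : ℝ):ℂ)^1 + (1/4:ℂ)*(b:ℂ)^4*((Real.sqrt 2 : ℝ):ℂ)^1*Complex.I^2 + (-1/4:ℂ)*(b:ℂ)^5*((Real.sqrt 2 : ℝ):ℂ)^1*Complex.I^1 + (1/4:ℂ)*(b:ℂ)^5*((Real.sqrt 2 : ℝ):ℂ)^1*Complex.I^3 + (1/4:ℂ)*(b:ℂ)^6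 + (-1/4:ℂ)*(b:ℂ)^6*Complex.I^2 + (1/4:ℂ)*(b:ℂ)^6*Complex.I^4 + (-1/8:ℂ)*(b:ℂ)^6*((Real.sqrt 2 : ℝ):ℂ)^1 + (1/8:ℂ)*(b:ℂ)^6*((Real.sqrt 2 : ℝ):ℂ)^1*Complex.I^2 + (-1/8:ℂ)*(b:ℂ)^6*((Real.sqrt 2 : ℝ):ℂ)^1*Complex.I^4 + (3:ℂ)*(a:ℂ)^1*(b:ℂ)^2 + (3/4:ℂ)*(a:ℂ)^1*(b:ℂ)^2*((Real.sqrt 2 : ℝ):ℂ)^1 + (2:ℂ)*(a:ℂ)^1*(b:ℂ)^3*Complex.I^1 + (1:ℂ)*(a:ℂ)^1*(b:ℂ)^3*((Real.sqrt 2 : ℝ):ℂ)^1*Complex.I^1 + (-5/4:ℂ)*(a:ℂ)^1*(b:ℂ)^4*((Real.sqrt 2 : ℝ):ℂ)^1 + (5/4:ℂ)*(a:ℂ)^1*(b:ℂ)^4*((Real.sqrt 2 : ℝ):ℂ)^1*Complex.I^2 + (-3/2:ℂ)*(a:ℂ)^1*(b:ℂ)^5*Complex.I^1 + (3/2:ℂ)*(a:ℂ)^1*(b:ℂ)^5*Complex.I^3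 + (3/4:ℂ)*(a:ℂ)^1*(b:ℂ)^5*((Real.sqrt 2 : ℝ):ℂ)^1*Complex.I^1 + (-3/4:ℂ)*(a:ℂ)^1*(b:ℂ)^5*((Real.sqrt 2 : ℝ):ℂ)^1*Complex.I^3 + (3:ℂ)*(a:ℂ)^2*(b:ℂ)^2 + (3/2:ℂ)*(a:ℂ)^2*(b:ℂ)^2*((Real.sqrt 2 : ℝ):ℂ)^1 + (5/2:ℂ)*(a:ℂ)^2*(b:ℂ)^3*((Real.sqrt 2 : ℝ):ℂ)^1*Complex.I^1 + (-15/4:ℂ)*(a:ℂ)^2*(b:ℂ)^4 + (15/4:ℂ)*(a:ℂ)^2*(b:ℂ)^4*Complex.I^2 + (15/8:ℂ)*(a:ℂ)^2*(b:ℂ)^4*((Real.sqrt 2 : ℝ):ℂ)^1 + (-15/8:ℂ)*(a:ℂ)^2*(b:ℂ)^4*((Real.sqrt 2 : ℝ):ℂ)^1*Complex.I^2 + (5/2:ℂ)*(a:ℂ)^3*(b:ℂ)^2*((Real.sqrt 2 : ℝ):ℂ)^1 + (5:ℂ)*(a:ℂ)^3*(b:ℂ)^3*Complex.I^1 + (-5/2:ℂ)*(a:ℂ)^3*(b:ℂ)^3*((Real.sqrt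 2 : ℝ):ℂ)^1*Complex.I^1 + (15/4:ℂ)*(a:ℂ)^4*(b:ℂ)^2 + (-15/8:ℂ)*(a:ℂ)^4*(b:ℂ)^2*((Real.sqrt 2 : ℝ):ℂ)^1) * Complex.I_sq

private lemma normSq_eq (a b : ℝ) (hb : b ^ 2 = 1 - a ^ 2) :
    Complex.normSq (P6 ((a : ℂ) + (b : ℂ) * Complex.I)) =
      ((2 - Real.sqrt 2) / 2) ^ 2 +
        (1 + a) * ((Real.sqrt 2 - 1) + Real.sqrt 2 * a + (19/2 - 4 * Real.sqrt 2) * a ^ 2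
          + (11 * Real.sqrt 2 - 21/2) * a ^ 3 + (8 - 4 * Real.sqrt 2) * a ^ 4) := by
  rw [P6_form, Complex.normSq_add_mul_I, Xf, Yf]
  linear_combination ((1/4:ℝ)*(Real.sqrt 2)^2 + (-1:ℝ)*b^2 + (1/4:ℝ)*b^2*(Real.sqrt 2)^2 + (15/16:ℝ)*b^4 + (1/16:ℝ)*b^4*(Real.sqrt 2)^1 + (-33/64:ℝ)*b^4*(Real.sqrt 2)^2 + (3/16:ℝ)*b^6 + (1/16:ℝ)*b^6*(Real.sqrt 2)^1 + (-9/64:ℝ)*b^6*(Real.sqrt 2)^2 + (-3/16:ℝ)*b^8 + (-1/16:ℝ)*b^8*(Real.sqrt 2)^1 + (9/64:ℝ)*b^8*(Real.sqrt 2)^2 + (1/16:ℝ)*b^10 + (-1/16:ℝ)*b^10*(Real.sqrt 2)^1 + (1/64:ℝ)*b^10*(Real.sqrt 2)^2 + (2:ℝ)*a^1*(Real.sqrt 2)^1 + (-1/2:ℝ)*a^1*(Real.sqrt 2)^2 + (-1/2:ℝ)*a^1*b^2 + (1/4:ℝ)*a^1*b^2*(Real.sqrt 2)^1 + (-1/2:ℝ)*a^1*b^2*(Real.sqrt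 2)^2 + (2:ℝ)*a^1*b^4 + (-1/8:ℝ)*a^1*b^4*(Real.sqrt 2)^1 + (-15/16:ℝ)*a^1*b^4*(Real.sqrt 2)^2 + (-3/2:ℝ)*a^1*b^6 + (3/4:ℝ)*a^1*b^6*(Real.sqrt 2)^1 + (1/4:ℝ)*a^1*b^6*(Real.sqrt 2)^2 + (1/8:ℝ)*a^1*b^8*(Real.sqrt 2)^1 + (-1/16:ℝ)*a^1*b^8*(Real.sqrt 2)^2 + (3:ℝ)*a^2 + (-3:ℝ)*a^2*(Real.sqrt 2)^1 + (3:ℝ)*a^2*(Real.sqrt 2)^2 + (15/8:ℝ)*a^2*b^2 + (-31/8:ℝ)*a^2*b^2*(Real.sqrt 2)^1 + (55/32:ℝ)*a^2*b^2*(Real.sqrt 2)^2 + (1/16:ℝ)*a^2*b^4 + (-29/16:ℝ)*a^2*b^4*(Real.sqrt 2)^1 + (93/64:ℝ)*a^2*b^4*(Real.sqrt 2)^2 + (-1/4:ℝ)*a^2*b^6 + (-1/4:ℝ)*a^2*b^6*(Real.sqrt 2)^1 + (7/16:ℝ)*a^2*b^6*(Real.sqrt 2)^2 + (5/16:ℝ)*a^2*b^8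 + (-5/16:ℝ)*a^2*b^8*(Real.sqrt 2)^1 + (5/64:ℝ)*a^2*b^8*(Real.sqrt 2)^2 + (-9/2:ℝ)*a^3 + (29/4:ℝ)*a^3*(Real.sqrt 2)^1 + (1:ℝ)*a^3*(Real.sqrt 2)^2 + (-4:ℝ)*a^3*b^2 + (19/4:ℝ)*a^3*b^2*(Real.sqrt 2)^1 + (-3/8:ℝ)*a^3*b^2*(Real.sqrt 2)^2 + (-5/2:ℝ)*a^3*b^4 + (7/4:ℝ)*a^3*b^4*(Real.sqrt 2)^1 + (1/2:ℝ)*a^3*b^4*(Real.sqrt 2)^2 + (1/2:ℝ)*a^3*b^6*(Real.sqrt 2)^1 + (-1/4:ℝ)*a^3*b^6*(Real.sqrt 2)^2 + (31/16:ℝ)*a^4 + (49/16:ℝ)*a^4*(Real.sqrt 2)^1 + (31/64:ℝ)*a^4*(Real.sqrt 2)^2 + (9/16:ℝ)*a^4*b^2 + (-13/16:ℝ)*a^4*b^2*(Real.sqrt 2)^1 + (101/64:ℝ)*a^4*b^2*(Real.sqrt 2)^2 + (3/8:ℝ)*a^4*b^4 + (-3/8:ℝ)*a^4*b^4*(Real.sqrt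 2)^1 + (15/32:ℝ)*a^4*b^4*(Real.sqrt 2)^2 + (5/8:ℝ)*a^4*b^6 + (-5/8:ℝ)*a^4*b^6*(Real.sqrt 2)^1 + (5/32:ℝ)*a^4*b^6*(Real.sqrt 2)^2 + (2:ℝ)*a^5 + (7/8:ℝ)*a^5*(Real.sqrt 2)^1 + (9/16:ℝ)*a^5*(Real.sqrt 2)^2 + (-1/2:ℝ)*a^5*b^2 + (5/4:ℝ)*a^5*b^2*(Real.sqrt 2)^1 + (1/4:ℝ)*a^5*b^2*(Real.sqrt 2)^2 + (3/4:ℝ)*a^5*b^4*(Real.sqrt 2)^1 + (-3/8:ℝ)*a^5*b^4*(Real.sqrt 2)^2 + (11/16:ℝ)*a^6 + (17/16:ℝ)*a^6*(Real.sqrt 2)^1 + (-1/64:ℝ)*a^6*(Real.sqrt 2)^2 + (3/4:ℝ)*a^6*b^2 + (-1/4:ℝ)*a^6*b^2*(Real.sqrt 2)^1 + (3/16:ℝ)*a^6*b^2*(Real.sqrt 2)^2 + (5/8:ℝ)*a^6*b^4 + (-5/8:ℝ)*a^6*b^4*(Real.sqrt 2)^1 + (5/32:ℝ)*a^6*b^4*(Real.sqrt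 2)^2 + (1/2:ℝ)*a^7 + (1/4:ℝ)*a^7*(Real.sqrt 2)^1 + (1/2:ℝ)*a^7*b^2*(Real.sqrt 2)^1 + (-1/4:ℝ)*a^7*b^2*(Real.sqrt 2)^2 + (5/16:ℝ)*a^8 + (-1/16:ℝ)*a^8*(Real.sqrt 2)^1 + (1/64:ℝ)*a^8*(Real.sqrt 2)^2 + (5/16:ℝ)*a^8*b^2 + (-5/16:ℝ)*a^8*b^2*(Real.sqrt 2)^1 + (5/64:ℝ)*a^8*b^2*(Real.sqrt 2)^2 + (1/8:ℝ)*a^9*(Real.sqrt 2)^1 + (-1/16:ℝ)*a^9*(Real.sqrt 2)^2 + (1/16:ℝ)*a^10 + (-1/16:ℝ)*a^10*(Real.sqrt 2)^1 + (1/64:ℝ)*a^10*(Real.sqrt 2)^2) * hb + ((-1/2:ℝ)*a^1 + (11/4:ℝ)*a^2 + (3/2:ℝ)*a^3 + (-7/4:ℝ)*a^4) * r_sq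

private lemma q1_nonneg (a : ℝ) (h1 : -1 ≤ a) (h2 : a ≤ 1) :
    0 ≤ (Real.sqrt 2 - 1) + Real.sqrt 2 * a + (19/2 - 4 * Real.sqrt 2) * a ^ 2
      + (11 * Real.sqrt 2 - 21/2) * a ^ 3 + (8 - 4 * Real.sqrt 2) * a ^ 4 := by
  nlinarith [r_lb, r_ub, sq_nonneg (a + 22/25), sq_nonneg (a^2 + 22/25*a), sq_nonneg (a+1),
    sq_nonneg (a-1), mul_nonneg (sub_nonneg.2 h2) (sub_nonneg.2 (neg_le_iff_add_nonneg.1 h1)),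
    sq_nonneg (a^2 - 1), sq_nonneg a]

private lemma rhs_eq : (1 / 4) * (1 / Real.cos (Real.pi / 8)) ^ 2 = (2 - Real.sqrt 2) / 2 := by
  have hs : Real.sqrt (2 + Real.sqrt 2) ^ 2 = 2 + Real.sqrt 2 := Real.sq_sqrt (by positivity)
  have hne : Real.sqrt (2 + Real.sqrt 2) ≠ 0 := by positivity
  have hne2 : (2 : ℝ) + Real.sqrt 2 ≠ 0 := by positivity
  rw [Real.cos_pi_div_eight]
  field_simp
  nlinarith [hs, r_sq, Real.sqrt_nonneg (2 + Real.sqrt 2), Real.sqrt_nonneg 2]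

theorem stmt16 :
    (∀ t : ℝ, (1 / 4) * (1 / Real.cos (Real.pi / 8)) ^ 2 ≤
        ‖P6 (Complex.exp (Complex.I * t))‖) ∧
      ‖P6 (Complex.exp (Complex.I * Real.pi))‖ =
        (1 / 4) * (1 / Real.cos (Real.pi / 8)) ^ 2 := by
  have hc : (0:ℝ) ≤ (2 - Real.sqrt 2) / 2 := by nlinarith [r_ub]
  constructor
  · intro t
    rw [rhs_eq]
    have hz : Complex.exp (Complex.I * t) = ((Real.cos t : ℝ) : ℂ) + ((Real.sin t : ℝ) : ℂ) * Complex.I := by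
      rw [mul_comm, Complex.exp_mul_I, Complex.ofReal_cos, Complex.ofReal_sin]
    rw [hz]
    have hb : Real.sin t ^ 2 = 1 - Real.cos t ^ 2 := Real.sin_sq t
    have h := normSq_eq (Real.cos t) (Real.sin t) hb
    have hq := q1_nonneg (Real.cos t) (Real.neg_one_le_cos t) (Real.cos_le_one t)
    have h1a : (0:ℝ) ≤ 1 + Real.cos t := by nlinarith [Real.neg_one_le_cos t]
    have hns : ((2 - Real.sqrt 2) / 2) ^ 2 ≤
        Complex.normSq (P6 (((Real.cos t : ℝ) : ℂ) + ((Real.sin t : ℝ) : ℂ) * Complex.I)) := by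
      rw [h]; nlinarith [mul_nonneg h1a hq]
    have habs := Complex.sq_norm (P6 (((Real.cos t : ℝ) : ℂ) + ((Real.sin t : ℝ) : ℂ) * Complex.I))
    nlinarith [norm_nonneg (P6 (((Real.cos t : ℝ) : ℂ) + ((Real.sin t : ℝ) : ℂ) * Complex.I))]
  · rw [rhs_eq, mul_comm, Complex.exp_pi_mul_I]
    have hm : P6 (-1) = ((Real.sqrt 2 / 2 - 1 : ℝ) : ℂ) := by
      rw [show ((-1:ℂ)) = (((-1:ℝ) : ℝ) : ℂ) + ((0:ℝ) : ℂ) * Complex.I by norm_num, P6_form]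
      rw [Xf, Yf]; push_cast; ring
    rw [hm, Complex.norm_real, Real.norm_eq_abs, abs_of_nonpos (by nlinarith [r_ub])]
    ring
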